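/- Let X be a countably κ-metrizable space and P ⊆ RO(X) a Q-admissible family. For the equivalence relation x ∼_P y (meaning x ∈ V ↔ y ∈ V for all V ∈ P), the equivalence class of x equals the intersection ⋂{cl V : x ∈ V ∈ P}. -/
import Mathlib


open Set Topology

section Defs

variable {X : Type*}

/-- A set is regular closed if it equals the closure of its interior. -/
def IsRegClosed [TopologicalSpace X] (C : Set X) : Prop := closure (interior C) = C

/-- A set is regular open if it equals the interior of its closure. -/
def IsRegOpen [TopologicalSpace X] (V : Set X) : Prop := interior (closure V) = V

/-- A countable κ-metric: axioms (K1)-(K3) and (K4_ω). -/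
structure IsCountKappaMetric [TopologicalSpace X] (ρ : X → Set X → ℝ) : Prop where
  nonneg : ∀ x C, IsRegClosed C → 0 ≤ ρ x C
  k1 : ∀ x C, IsRegClosed C → (ρ x C = 0 ↔ x ∈ C)
  k2 : ∀ x C D, IsRegClosed C → IsRegClosed D → C ⊆ D → ρ x D ≤ ρ x C
  k3 : ∀ C, IsRegClosed C → Continuous fun x => ρ x C
  k4omega : ∀ C : ℕ → Set X, (∀ n, IsRegClosed (C n)) → (∀ n, C n ⊆ C (n + 1)) →
    ∀ x, ρ x (closure (⋃ n, C n)) = ⨅ n, ρ x (C n)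

/-- Axiom (K4): the infimum identity for arbitrary nonempty totally ordered
(by inclusion) families of regular closed sets. -/
def K4Chains [TopologicalSpace X] (ρ : X → Set X → ℝ) : Prop :=
  ∀ 𝒞 : Set (Set X), 𝒞.Nonempty → (∀ C ∈ 𝒞, IsRegClosed C) →
    (∀ C ∈ 𝒞, ∀ D ∈ 𝒞, C ⊆ D ∨ D ⊆ C) →
    ∀ x, ρ x (closure (⋃₀ 𝒞)) = sInf ((ρ x) '' 𝒞)

/-- A (full) κ-metric: axioms (K1)-(K4). -/
structure IsKappaMetric [TopologicalSpace X] (ρ : X → Set X → ℝ)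
    extends IsCountKappaMetric ρ : Prop where
  k4 : K4Chains ρ

/-- Countable chain condition. -/
def CCCSpace (X : Type*) [TopologicalSpace X] : Prop :=
  ∀ 𝒪 : Set (Set X), (∀ U ∈ 𝒪, IsOpen U ∧ U.Nonempty) →
    𝒪.PairwiseDisjoint id → 𝒪.Countable

/-- Pseudocompactness: every continuous real-valued function is bounded. -/
def Pseudocompact (X : Type*) [TopologicalSpace X] : Prop :=
  ∀ f : X → ℝ, Continuous f → ∃ M, ∀ x, |f x| ≤ M

/-- d-open maps. -/
def IsDOpen {Y : Type*} [TopologicalSpace X] [TopologicalSpace Y] (f : X → Y) : Prop :=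
  ∀ U : Set X, IsOpen U → f '' U ⊆ interior (closure (f '' U))

/-- Q-admissible families of regular open sets with respect to ρ. -/
def QAdmissible [TopologicalSpace X] (ρ : X → Set X → ℝ) (P : Set (Set X)) : Prop :=
  (∀ V ∈ P, IsRegOpen V) ∧
  (∀ V ∈ P, ∀ q : ℚ,
    interior ((fun x => ρ x (closure V)) ⁻¹' Iic (q : ℝ)) ∈ P ∧
    interior ((fun x => ρ x (closure V)) ⁻¹' Ici (q : ℝ)) ∈ P) ∧
  (∀ V ∈ P, interior Vᶜ ∈ P) ∧
  (∀ U ∈ P, ∀ V ∈ P, U ∩ V ∈ P ∧ interior (closure (U ∪ V)) ∈ P)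

/-- The equivalence relation ∼_P. -/
def pSetoid (P : Set (Set X)) : Setoid X where
  r x y := ∀ V ∈ P, (x ∈ V ↔ y ∈ V)
  iseqv := ⟨fun _ _ _ => Iff.rfl, fun h V hV => (h V hV).symm,
    fun h1 h2 V hV => (h1 V hV).trans (h2 V hV)⟩

/-- The quotient X_P. -/
def XP (P : Set (Set X)) : Type _ := Quotient (pSetoid P)

/-- The quotient map q : X → X_P. -/
def qP (P : Set (Set X)) : X → XP P := Quotient.mk (pSetoid P)

/-- The topology on X_P generated by images of members of P. -/
def topXP [TopologicalSpace X] (P : Set (Set X)) : TopologicalSpace (XP P) :=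
  TopologicalSpace.generateFrom ((fun V => qP P '' V) '' P)

end Defs
/-- the ∼_P-class of x is ⋂{cl V : x ∈ V ∈ P}. -/
theorem stmt8 {X : Type*} [TopologicalSpace X] (ρ : X → Set X → ℝ)
    (hρ : IsCountKappaMetric ρ) (P : Set (Set X)) (hP : QAdmissible ρ P) (x : X) :
    {y | ∀ V ∈ P, (x ∈ V ↔ y ∈ V)} = ⋂₀ ((fun V => closure V) '' {V ∈ P | x ∈ V}) := by
  ext y
  simp only [mem_setOf_eq, mem_sInter, mem_image, Set.mem_sep_iff]
  constructor
  · rintro h t ⟨V, ⟨hV, hxV⟩, rfl⟩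
    exact subset_closure ((h V hV).mp hxV)
  · intro h V hV
    obtain ⟨hreg, hops, hcompl, _⟩ := hP
    set U := interior Vᶜ with hU
    have hUP : U ∈ P := hcompl V hV
    have hregV : IsRegOpen V := hreg V hV
    have hregU : IsRegOpen U := hreg U hUP
    have hclU : IsRegClosed (closure U) := by
      unfold IsRegClosed
      rw [hregU]
    have hclUV : closure U = Vᶜ := by
      rw [hU, interior_compl, closure_compl, hregV]
    have hcont : Continuous fun z => ρ z (closure U) := hρ.k3 _ hclU
    constructor
    · intro hxV
      have hxnot : x ∉ closure U := by rw [hclUV]; simpa using hxV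
      have hr0 : 0 < ρ x (closure U) := by
        rcases lt_or_eq_of_le (hρ.nonneg x _ hclU) with h' | h'
        · exact h'
        · exact absurd ((hρ.k1 x _ hclU).mp h'.symm) hxnot
      obtain ⟨q, hq0, hqr⟩ := exists_rat_btwn hr0
      set W := interior ((fun z => ρ z (closure U)) ⁻¹' Ici (q : ℝ)) with hW
      have hWP : W ∈ P := (hops U hUP q).2
      have hxW : x ∈ W := by
        have hsub : (fun z => ρ z (closure U)) ⁻¹' Ioi (q : ℝ) ⊆
            (fun z => ρ z (closure U)) ⁻¹' Ici (q : ℝ) := preimage_mono Ioi_subset_Ici_self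
        exact interior_maximal hsub (hcont.isOpen_preimage _ isOpen_Ioi) hqr
      have hyW : y ∈ closure W := h _ ⟨W, ⟨hWP, hxW⟩, rfl⟩
      have hysub : y ∈ (fun z => ρ z (closure U)) ⁻¹' Ici (q : ℝ) :=
        closure_minimal interior_subset (isClosed_Ici.preimage hcont) hyW
      have hyne : ρ y (closure U) ≠ 0 := by
        intro h0
        have : (q : ℝ) ≤ 0 := h0 ▸ hysub
        linarith
      have : y ∉ closure U := fun hyc => hyne ((hρ.k1 y _ hclU).mpr hyc)
      rw [hclUV] at this
      simpa using this
    · intro hyV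
      by_contra hxV
      have hxc : x ∈ closure U := by rw [hclUV]; exact hxV
      have hx0 : ρ x (closure U) = 0 := (hρ.k1 x _ hclU).mpr hxc
      have hynot : y ∉ closure U := by rw [hclUV]; simpa using hyV
      have hs0 : 0 < ρ y (closure U) := by
        rcases lt_or_eq_of_le (hρ.nonneg y _ hclU) with h' | h'
        · exact h'
        · exact absurd ((hρ.k1 y _ hclU).mp h'.symm) hynot
      obtain ⟨q, hq0, hqs⟩ := exists_rat_btwn hs0
      set W := interior ((fun z => ρ z (closure U)) ⁻¹' Iic (q : ℝ)) with hW
      have hWP : W ∈ P := (hops U hUP q).1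
      have hxW : x ∈ W := by
        have hx : x ∈ (fun z => ρ z (closure U)) ⁻¹' Iio (q : ℝ) := by
          show ρ x (closure U) < (q : ℝ)
          rw [hx0]; exact_mod_cast hq0
        have hsub : (fun z => ρ z (closure U)) ⁻¹' Iio (q : ℝ) ⊆
            (fun z => ρ z (closure U)) ⁻¹' Iic (q : ℝ) := preimage_mono Iio_subset_Iic_self
        exact interior_maximal hsub (hcont.isOpen_preimage _ isOpen_Iio) hx
      have hyW : y ∈ closure W := h _ ⟨W, ⟨hWP, hxW⟩, rfl⟩
      have hysub : y ∈ (fun z => ρ z (closure U)) ⁻¹' Iic (q : ℝ) :=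
        closure_minimal interior_subset (isClosed_Iic.preimage hcont) hyW
      have : ρ y (closure U) ≤ (q : ℝ) := hysub
      linarith
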